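/- The α-representation identity: (1/(α-1)) · ∂/∂θ' [ p_{θ'}(x)^{α-1} / Σ_y p_θ(y) p_{θ'}(y)^{α-1} ] evaluated at θ' = θ equals (p_θ^{(α)}(x)/p_θ(x)) [ ∂_θ log p_θ(x) - E_{p_θ^{(α)}}[∂_θ log p_θ(X)] ]. -/

import Mathlib

open Real Finset

/-- The α-representation identity: the derivative at θ' = θ of the escort-type
expression equals (α-1) times the α-representation of ∂_θ. -/
theorem alpha_representation_identity {X : Type*} [Fintype X]
    (p : ℝ → X → ℝ) (θ₀ : ℝ) (dp : X → ℝ)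
    (hpos : ∀ θ x, 0 < p θ x) (hsum : ∀ θ, ∑ x, p θ x = 1)
    (hderiv : ∀ x, HasDerivAt (fun θ => p θ x) (dp x) θ₀)
    (α : ℝ) (hα : 0 < α) (hα1 : α ≠ 1) (x : X) :
    HasDerivAt
      (fun θ' => (p θ' x) ^ (α - 1) / (∑ y, p θ₀ y * (p θ' y) ^ (α - 1)))
      ((α - 1) *
        (((p θ₀ x) ^ α / (∑ y, (p θ₀ y) ^ α)) / p θ₀ x *
          (dp x / p θ₀ x
            - ∑ y, ((p θ₀ y) ^ α / (∑ z, (p θ₀ z) ^ α)) * (dp y / p θ₀ y))))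
      θ₀ := by
  have hXne : Nonempty X := by
    rcases isEmpty_or_nonempty X with h | h
    · exact absurd (hsum θ₀) (by simp)
    · exact h
  have hne : ∀ y, p θ₀ y ≠ 0 := fun y => (hpos θ₀ y).ne'
  have hf : HasDerivAt (fun θ' => (p θ' x) ^ (α - 1))
      (dp x * (α - 1) * (p θ₀ x) ^ (α - 1 - 1)) θ₀ :=
    (hderiv x).rpow_const (Or.inl (hne x))
  have hg : HasDerivAt (fun θ' => ∑ y, p θ₀ y * (p θ' y) ^ (α - 1))
      (∑ y, p θ₀ y * (dp y * (α - 1) * (p θ₀ y) ^ (α - 1 - 1))) θ₀ := by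
    apply HasDerivAt.fun_sum
    intro y _
    exact ((hderiv y).rpow_const (Or.inl (hne y))).const_mul _
  have key : ∀ y, p θ₀ y * (p θ₀ y) ^ (α - 1) = (p θ₀ y) ^ α := by
    intro y
    rw [mul_comm, ← Real.rpow_add_one (hne y)]
    norm_num
  have key2 : ∀ y, (p θ₀ y) ^ (α - 1 - 1) = (p θ₀ y) ^ (α - 1) / p θ₀ y := by
    intro y
    rw [eq_div_iff (hne y), ← Real.rpow_add_one (hne y)]
    norm_num
  have hGpos : 0 < ∑ y, p θ₀ y * (p θ₀ y) ^ (α - 1) :=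
    Finset.sum_pos (fun y _ => mul_pos (hpos θ₀ y) (Real.rpow_pos_of_pos (hpos θ₀ y) _))
      Finset.univ_nonempty
  have hGS : (∑ y, p θ₀ y * (p θ₀ y) ^ (α - 1)) = ∑ y, (p θ₀ y) ^ α :=
    Finset.sum_congr rfl fun y _ => key y
  have hSpos : 0 < ∑ y, (p θ₀ y) ^ α := hGS ▸ hGpos
  have hsum2 : (∑ y, p θ₀ y * (dp y * (α - 1) * (p θ₀ y) ^ (α - 1 - 1)))
      = (α - 1) * ∑ y, (p θ₀ y) ^ (α - 1) * dp y := by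
    rw [Finset.mul_sum]
    refine Finset.sum_congr rfl fun y _ => ?_
    rw [key2 y]
    field_simp [hne y]
  have hsum1 : (∑ y, ((p θ₀ y) ^ α / (∑ z, (p θ₀ z) ^ α)) * (dp y / p θ₀ y))
      = (∑ y, (p θ₀ y) ^ (α - 1) * dp y) / (∑ z, (p θ₀ z) ^ α) := by
    rw [Finset.sum_div]
    refine Finset.sum_congr rfl fun y _ => ?_
    rw [← key y]
    field_simp [hne y, hSpos.ne']
  have := hf.fun_div hg hGpos.ne'
  refine this.congr_deriv ?_
  rw [hGS, hsum2, hsum1, key2 x, ← key x]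
  field_simp [hne x, hSpos.ne']
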